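/- Let τ, r ≥ 0 be constants, A ∈ ℝ^{n×n}, B ∈ ℝ^{n×m}, k ∈ ℝ^{m×n}. Suppose there exist constants Q₀, σ₀ > 0 such that every continuous, locally absolutely continuous function z : [−max(r,τ),∞) → ℝⁿ satisfying ż(t) = (A+Bk) z(t) + B k e^{Ar} (z(t−τ) − z(t−r)) for almost every t ≥ 0 satisfies |z(t)| ≤ Q₀ e^{−σ₀ t} max_{−max(r,τ) ≤ s ≤ 0} |z(s)| for all t ≥ 0. Then the zero solution of the constant-delay closed-loop system is globally exponentially stable: there exist constants Q, σ > 0 such that every solution (x, u) of the constant-delay closed-loop system satisfies |x(t)| + max_{t−max(r,τ) ≤ s ≤ t} |u(s)| ≤ Q e^{−σt} (|x(0)| + max_{−max(r,τ) ≤ s ≤ 0} |u(s)|) for all t ≥ 0. -/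

import Mathlib

open MeasureTheory Set

noncomputable def mv {n m : ℕ} (A : Matrix (Fin n) (Fin m) ℝ)
    (x : EuclideanSpace ℝ (Fin m)) : EuclideanSpace ℝ (Fin n) :=
  Matrix.toEuclideanLin A x

noncomputable def mexp {n : ℕ} (A : Matrix (Fin n) (Fin n) ℝ) (t : ℝ) :
    Matrix (Fin n) (Fin n) ℝ :=
  NormedSpace.exp (t • A)

noncomputable def toCLME {p q : ℕ} : Matrix (Fin p) (Fin q) ℝ ≃ₗ[ℝ]
    (EuclideanSpace ℝ (Fin q) →L[ℝ] EuclideanSpace ℝ (Fin p)) :=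
  Matrix.toEuclideanLin.trans LinearMap.toContinuousLinearMap

lemma mv_eq_toCLME {p q : ℕ} (P : Matrix (Fin p) (Fin q) ℝ) (v) : mv P v = toCLME P v := rfl

lemma mv_add {p q : ℕ} (P Q : Matrix (Fin p) (Fin q) ℝ) (v) :
    mv (P + Q) v = mv P v + mv Q v := by simp [mv, map_add]

lemma mv_mul {p q s : ℕ} (P : Matrix (Fin p) (Fin q) ℝ) (Q : Matrix (Fin q) (Fin s) ℝ) (v) :
    mv (P * Q) v = mv P (mv Q v) := by
  simp [mv, Matrix.toEuclideanLin_apply, Matrix.mulVec_mulVec]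

lemma mv_one {p : ℕ} (v : EuclideanSpace ℝ (Fin p)) : mv 1 v = v := by
  simp [mv, Matrix.toEuclideanLin_apply, Matrix.one_mulVec]

lemma mv_vadd {p q : ℕ} (P : Matrix (Fin p) (Fin q) ℝ) (v w) :
    mv P (v + w) = mv P v + mv P w := map_add (Matrix.toEuclideanLin P) v w

lemma mv_vsub {p q : ℕ} (P : Matrix (Fin p) (Fin q) ℝ) (v w) :
    mv P (v - w) = mv P v - mv P w := map_sub (Matrix.toEuclideanLin P) v w

lemma norm_mv_le {p q : ℕ} (P : Matrix (Fin p) (Fin q) ℝ) (v) :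
    ‖mv P v‖ ≤ ‖toCLME P‖ * ‖v‖ := (toCLME P).le_opNorm v

lemma mexp_zero {p : ℕ} (A : Matrix (Fin p) (Fin p) ℝ) : mexp A 0 = 1 := by
  simp [mexp, NormedSpace.exp_zero]

lemma mexp_add {p : ℕ} (A : Matrix (Fin p) (Fin p) ℝ) (s t : ℝ) :
    mexp A (s + t) = mexp A s * mexp A t := by
  rw [mexp, add_smul]
  exact Matrix.exp_add_of_commute _ _ ((Commute.refl A).smul_left s |>.smul_right t)

lemma mv_mexp_cancel {p : ℕ} (A : Matrix (Fin p) (Fin p) ℝ) (s t : ℝ)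
    (v : EuclideanSpace ℝ (Fin p)) :
    mv (mexp A s) (mv (mexp A t) v) = mv (mexp A (s + t)) v := by
  rw [mexp_add, mv_mul]

lemma hasDerivAt_toCLME_mexp {p : ℕ} (A : Matrix (Fin p) (Fin p) ℝ) (t : ℝ) :
    HasDerivAt (fun s => toCLME (mexp A s)) (toCLME (mexp A t * A)) t := by
  letI : SeminormedRing (Matrix (Fin p) (Fin p) ℝ) := Matrix.linftyOpSemiNormedRing
  letI : NormedRing (Matrix (Fin p) (Fin p) ℝ) := Matrix.linftyOpNormedRing
  letI : NormedAlgebra ℝ (Matrix (Fin p) (Fin p) ℝ) := Matrix.linftyOpNormedAlgebra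
  have h := hasDerivAt_exp_smul_const (𝕂 := ℝ) A t
  have := ((LinearMap.toContinuousLinearMap
      (toCLME (p := p) (q := p)).toLinearMap).hasFDerivAt
      (x := NormedSpace.exp (t • A))).comp_hasDerivAt t h
  exact this

lemma continuous_toCLME_mexp {p : ℕ} (A : Matrix (Fin p) (Fin p) ℝ) :
    Continuous (fun s => toCLME (mexp A s)) :=
  continuous_iff_continuousAt.2 fun t => (hasDerivAt_toCLME_mexp A t).continuousAt

section sys
variable {n m : ℕ} {A : Matrix (Fin n) (Fin n) ℝ} {B : Matrix (Fin n) (Fin m) ℝ}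
  {τ r M : ℝ} {x : ℝ → EuclideanSpace ℝ (Fin n)} {u : ℝ → EuclideanSpace ℝ (Fin m)}

/-- continuity of the basic integrand. -/
lemma f_contOn (hτ : 0 ≤ τ) (hτM : τ ≤ M)
    (hx : ContinuousOn x (Ici 0)) (hu : ContinuousOn u (Ici (-M))) :
    ContinuousOn (fun s => mv A (x s) + mv B (u (s - τ))) (Ici 0) := by
  have h1 : ContinuousOn (fun s => mv A (x s)) (Ici 0) := by
    simp only [mv_eq_toCLME]
    exact (toCLME A).continuous.comp_continuousOn hx
  have h2 : ContinuousOn (fun s => mv B (u (s - τ))) (Ici 0) := by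
    simp only [mv_eq_toCLME]
    refine (toCLME B).continuous.comp_continuousOn (hu.comp
      ((continuous_id.sub continuous_const).continuousOn) ?_)
    intro s hs
    simp only [mem_Ici] at *
    linarith
  exact h1.add h2

lemma x_hasDerivAt (hτ : 0 ≤ τ) (hτM : τ ≤ M)
    (hx : ContinuousOn x (Ici 0)) (hu : ContinuousOn u (Ici (-M)))
    (hxeq : ∀ t : ℝ, 0 ≤ t →
      x t = x 0 + ∫ s in (0 : ℝ)..t, (mv A (x s) + mv B (u (s - τ))))
    {t : ℝ} (ht : 0 < t) :
    HasDerivAt x (mv A (x t) + mv B (u (t - τ))) t := by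
  set f : ℝ → EuclideanSpace ℝ (Fin n) := fun s => mv A (x s) + mv B (u (s - τ)) with hf
  have fc : ContinuousOn f (Ici 0) := f_contOn hτ hτM hx hu
  have fc' : ContinuousOn f (Ioi 0) := fc.mono Ioi_subset_Ici_self
  have hmeas : StronglyMeasurableAtFilter f (nhds t) :=
    ContinuousOn.stronglyMeasurableAtFilter isOpen_Ioi fc' t ht
  have hint : IntervalIntegrable f volume 0 t := by
    apply ContinuousOn.intervalIntegrable
    apply fc.mono
    rw [uIcc_of_le ht.le]
    exact Icc_subset_Ici_self
  have hca : ContinuousAt f t := fc'.continuousAt (Ioi_mem_nhds ht)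
  have h := (intervalIntegral.integral_hasDerivAt_right hint hmeas hca).const_add (x 0)
  have heq : (fun t => x 0 + ∫ s in (0:ℝ)..t, f s) =ᶠ[nhds t] x := by
    filter_upwards [Ioi_mem_nhds ht] with s hs
    exact (hxeq s (le_of_lt hs)).symm
  exact h.congr_of_eventuallyEq heq.symm

lemma y_hasDerivAt (hτ : 0 ≤ τ) (hτM : τ ≤ M)
    (hx : ContinuousOn x (Ici 0)) (hu : ContinuousOn u (Ici (-M)))
    (hxeq : ∀ t : ℝ, 0 ≤ t →
      x t = x 0 + ∫ s in (0 : ℝ)..t, (mv A (x s) + mv B (u (s - τ))))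
    {t : ℝ} (ht : 0 < t) :
    HasDerivAt (fun s => mv (mexp A (-s)) (x s)) (mv (mexp A (-t)) (mv B (u (t - τ)))) t := by
  have hc : HasDerivAt (fun s : ℝ => toCLME (mexp A (-s)))
      ((-1 : ℝ) • toCLME (mexp A (-t) * A)) t :=
    (hasDerivAt_toCLME_mexp A (-t)).scomp t (hasDerivAt_neg t)
  have hxd := x_hasDerivAt hτ hτM hx hu hxeq ht
  have h := hc.clm_apply hxd
  simp only [mv_eq_toCLME] at h ⊢
  refine h.congr_deriv ?_
  have : toCLME (mexp A (-t) * A) (x t) = toCLME (mexp A (-t)) (toCLME A (x t)) := by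
    rw [← mv_eq_toCLME, ← mv_eq_toCLME, ← mv_eq_toCLME, mv_mul]
  simp only [ContinuousLinearMap.smul_apply, neg_one_smul, map_add, this]
  abel

/-- Variation of constants. -/
lemma voc (hτ : 0 ≤ τ) (hτM : τ ≤ M)
    (hx : ContinuousOn x (Ici 0)) (hu : ContinuousOn u (Ici (-M)))
    (hxeq : ∀ t : ℝ, 0 ≤ t →
      x t = x 0 + ∫ s in (0 : ℝ)..t, (mv A (x s) + mv B (u (s - τ))))
    {a b : ℝ} (ha : 0 ≤ a) (hab : a ≤ b) :
    ∫ θ in a..b, mv (mexp A (b - θ)) (mv B (u (θ - τ))) =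
      x b - mv (mexp A (b - a)) (x a) := by
  set y : ℝ → EuclideanSpace ℝ (Fin n) := fun s => mv (mexp A (-s)) (x s) with hy
  set g : ℝ → EuclideanSpace ℝ (Fin n) := fun s => mv (mexp A (-s)) (mv B (u (s - τ))) with hg
  have ycont : ContinuousOn y (Icc a b) := by
    simp only [hy, mv_eq_toCLME]
    exact ContinuousOn.clm_apply
      (((continuous_toCLME_mexp A).comp continuous_neg).continuousOn)
      (hx.mono (fun s hs => le_trans ha hs.1))
  have gcont : ContinuousOn g (Icc a b) := by
    simp only [hg, mv_eq_toCLME]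
    refine ContinuousOn.clm_apply
      (((continuous_toCLME_mexp A).comp continuous_neg).continuousOn) ?_
    refine ((toCLME B).continuous.comp_continuousOn (hu.comp
      ((continuous_id.sub continuous_const).continuousOn) ?_))
    intro s hs
    simp only [mem_Ici]
    have := hs.1
    linarith
  have gint : IntervalIntegrable g volume a b := by
    apply ContinuousOn.intervalIntegrable
    rwa [uIcc_of_le hab]
  have key : ∫ θ in a..b, g θ = y b - y a := by
    apply intervalIntegral.integral_eq_sub_of_hasDeriv_right_of_le hab ycont ?_ gint
    intro s hs
    exact (y_hasDerivAt hτ hτM hx hu hxeq (lt_of_le_of_lt ha hs.1)).hasDerivWithinAt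
  have happ := congrArg (fun v => mv (mexp A b) v) key
  rw [mv_vsub] at happ
  have hLHS : mv (mexp A b) (∫ θ in a..b, g θ) =
      ∫ θ in a..b, mv (mexp A (b - θ)) (mv B (u (θ - τ))) := by
    rw [mv_eq_toCLME, ← ContinuousLinearMap.intervalIntegral_comp_comm _ gint]
    apply intervalIntegral.integral_congr
    intro θ _
    simp only [hg, ← mv_eq_toCLME]
    rw [mv_mexp_cancel, ← sub_eq_add_neg]
  rw [hLHS] at happ
  rw [happ, hy]
  simp only
  rw [mv_mexp_cancel, mv_mexp_cancel, add_neg_cancel, mexp_zero, mv_one]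
  simp [sub_eq_add_neg]

variable {k : Matrix (Fin m) (Fin n) ℝ}

lemma Jchange {t' : ℝ} :
    (∫ s in t'..(t' + r), mv (mexp A (t' + r - s)) (mv B (u (s - r)))) =
    ∫ θ in (t' + τ - r)..(t' + τ), mv (mexp A (t' + τ - θ)) (mv B (u (θ - τ))) := by
  have := intervalIntegral.integral_comp_add_right (a := t' + τ - r) (b := t' + τ)
    (fun s => mv (mexp A (t' + r - s)) (mv B (u (s - r)))) (r - τ)
  rw [show t' + τ - r + (r - τ) = t' by ring, show t' + τ + (r - τ) = t' + r by ring] at this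
  rw [← this]
  apply intervalIntegral.integral_congr
  intro θ _
  simp only
  rw [show t' + r - (θ + (r - τ)) = t' + τ - θ by ring, show θ + (r - τ) - r = θ - τ by ring]

/-- Exact predictor formula when `t' + τ - r ≥ 0`. -/
lemma Jform (hτ : 0 ≤ τ) (hr : 0 ≤ r) (hτM : τ ≤ M)
    (hx : ContinuousOn x (Ici 0)) (hu : ContinuousOn u (Ici (-M)))
    (hxeq : ∀ t : ℝ, 0 ≤ t →
      x t = x 0 + ∫ s in (0 : ℝ)..t, (mv A (x s) + mv B (u (s - τ))))
    {t' : ℝ} (hα : 0 ≤ t' + τ - r) :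
    (∫ s in t'..(t' + r), mv (mexp A (t' + r - s)) (mv B (u (s - r)))) =
      x (t' + τ) - mv (mexp A r) (x (t' + τ - r)) := by
  rw [Jchange]
  have h := voc (A := A) hτ hτM hx hu hxeq (a := t' + τ - r) (b := t' + τ) hα (by linarith)
  rw [show t' + τ - (t' + τ - r) = r by ring] at h
  exact h

lemma ubound_exact (hτ : 0 ≤ τ) (hr : 0 ≤ r) (hτM : τ ≤ M)
    (hx : ContinuousOn x (Ici 0)) (hu : ContinuousOn u (Ici (-M)))
    (hxeq : ∀ t : ℝ, 0 ≤ t →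
      x t = x 0 + ∫ s in (0 : ℝ)..t, (mv A (x s) + mv B (u (s - τ))))
    (hueq : ∀ t : ℝ, 0 ≤ t →
      u t = mv k (mv (mexp A r) (x t)) +
        mv k (∫ s in t..(t + r), mv (mexp A (t + r - s)) (mv B (u (s - r)))))
    {t' : ℝ} (ht' : 0 ≤ t') (hα : 0 ≤ t' + τ - r) :
    u t' = mv k (mv (mexp A r) (x t')) +
      mv k (x (t' + τ) - mv (mexp A r) (x (t' + τ - r))) := by
  rw [hueq t' ht', Jform hτ hr hτM hx hu hxeq hα]

/-- General norm bound on `u` for `t' ≥ 0`. -/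
lemma ubound (hτ : 0 ≤ τ) (hr : 0 ≤ r) (hτM : τ ≤ M) (hrM : r ≤ M)
    (hx : ContinuousOn x (Ici 0)) (hu : ContinuousOn u (Ici (-M)))
    (hxeq : ∀ t : ℝ, 0 ≤ t →
      x t = x 0 + ∫ s in (0 : ℝ)..t, (mv A (x s) + mv B (u (s - τ))))
    (hueq : ∀ t : ℝ, 0 ≤ t →
      u t = mv k (mv (mexp A r) (x t)) +
        mv k (∫ s in t..(t + r), mv (mexp A (t + r - s)) (mv B (u (s - r)))))
    {Du Ce : ℝ} (hDu : ∀ s ∈ Icc (-M) 0, ‖u s‖ ≤ Du) (hDu0 : 0 ≤ Du)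
    (hCe : ∀ s ∈ Icc 0 r, ‖toCLME (mexp A s)‖ ≤ Ce) (hCe0 : 0 ≤ Ce)
    {t' : ℝ} (ht' : 0 ≤ t') :
    ‖u t'‖ ≤ ‖toCLME k‖ * (Ce * ‖x t'‖ +
      (‖toCLME B‖ * Ce * r * Du + ‖x (t' + τ)‖ + Ce * ‖x (max (t' + τ - r) 0)‖)) := by
  have hCer : ‖toCLME (mexp A r)‖ ≤ Ce := hCe r ⟨hr, le_refl r⟩
  have hkey : ‖(∫ s in t'..(t' + r), mv (mexp A (t' + r - s)) (mv B (u (s - r))))‖ ≤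
      ‖toCLME B‖ * Ce * r * Du + ‖x (t' + τ)‖ + Ce * ‖x (max (t' + τ - r) 0)‖ := by
    rcases le_or_gt 0 (t' + τ - r) with hα | hα
    · rw [Jform hτ hr hτM hx hu hxeq hα, max_eq_left hα]
      have h1 : ‖mv (mexp A r) (x (t' + τ - r))‖ ≤ Ce * ‖x (t' + τ - r)‖ :=
        (norm_mv_le _ _).trans (mul_le_mul_of_nonneg_right hCer (norm_nonneg _))
      have h2 : (0:ℝ) ≤ ‖toCLME B‖ * Ce * r * Du := by positivity
      have h3 := norm_sub_le (x (t' + τ)) (mv (mexp A r) (x (t' + τ - r)))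
      linarith
    · rw [max_eq_right (by linarith), Jchange]
      have hβ0 : (0:ℝ) ≤ t' + τ := by linarith
      have hβr : t' + τ ≤ r := by linarith
      have hG1 : ContinuousOn (fun θ => mv (mexp A (t' + τ - θ)) (mv B (u (θ - τ))))
          (Icc (t' + τ - r) (t' + τ)) := by
        simp only [mv_eq_toCLME]
        refine ContinuousOn.clm_apply ?_ ?_
        · exact ((continuous_toCLME_mexp A).comp (continuous_const.sub continuous_id)).continuousOn
        · refine (toCLME B).continuous.comp_continuousOn (hu.comp
            ((continuous_id.sub continuous_const).continuousOn) ?_)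
          intro s hs
          have := hs.1
          simp only [mem_Ici]
          linarith
      have hint1 : IntervalIntegrable (fun θ => mv (mexp A (t' + τ - θ)) (mv B (u (θ - τ))))
          volume (t' + τ - r) 0 := by
        apply ContinuousOn.intervalIntegrable
        apply hG1.mono
        rw [uIcc_of_le hα.le]
        exact Icc_subset_Icc le_rfl hβ0
      have hint2 : IntervalIntegrable (fun θ => mv (mexp A (t' + τ - θ)) (mv B (u (θ - τ))))
          volume 0 (t' + τ) := by
        apply ContinuousOn.intervalIntegrable
        apply hG1.mono
        rw [uIcc_of_le hβ0]
        exact Icc_subset_Icc hα.le le_rfl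
      rw [← intervalIntegral.integral_add_adjacent_intervals hint1 hint2]
      have hvoc : (∫ θ in (0:ℝ)..(t' + τ), mv (mexp A (t' + τ - θ)) (mv B (u (θ - τ)))) =
          x (t' + τ) - mv (mexp A (t' + τ)) (x 0) := by
        have h := voc (A := A) hτ hτM hx hu hxeq (a := 0) (b := t' + τ) le_rfl hβ0
        rwa [sub_zero] at h
      rw [hvoc]
      have hnorm1 : ‖∫ θ in (t' + τ - r)..(0:ℝ), mv (mexp A (t' + τ - θ)) (mv B (u (θ - τ)))‖ ≤
          ‖toCLME B‖ * Ce * r * Du := by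
        have hb : ∀ θ ∈ Set.uIoc (t' + τ - r) (0:ℝ), ‖mv (mexp A (t' + τ - θ)) (mv B (u (θ - τ)))‖ ≤
            Ce * (‖toCLME B‖ * Du) := by
          intro θ hθ
          rw [uIoc_of_le hα.le] at hθ
          have hθ1 := hθ.1
          have hθ2 := hθ.2
          have h2 : ‖toCLME (mexp A (t' + τ - θ))‖ ≤ Ce := hCe _ ⟨by linarith, by linarith⟩
          have h4 : ‖u (θ - τ)‖ ≤ Du := hDu _ ⟨by linarith, by linarith⟩
          have h3 : ‖mv B (u (θ - τ))‖ ≤ ‖toCLME B‖ * Du :=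
            (norm_mv_le _ _).trans (mul_le_mul_of_nonneg_left h4 (norm_nonneg _))
          exact (norm_mv_le _ _).trans (mul_le_mul h2 h3 (norm_nonneg _) hCe0)
        have hle := intervalIntegral.norm_integral_le_of_norm_le_const hb
        have habs : |(0:ℝ) - (t' + τ - r)| ≤ r := by
          rw [abs_of_nonneg (by linarith)]
          linarith
        calc ‖∫ θ in (t' + τ - r)..(0:ℝ), mv (mexp A (t' + τ - θ)) (mv B (u (θ - τ)))‖ ≤
            Ce * (‖toCLME B‖ * Du) * |0 - (t' + τ - r)| := hle
          _ ≤ Ce * (‖toCLME B‖ * Du) * r := by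
              apply mul_le_mul_of_nonneg_left habs (by positivity)
          _ = ‖toCLME B‖ * Ce * r * Du := by ring
      have hnorm2 : ‖mv (mexp A (t' + τ)) (x 0)‖ ≤ Ce * ‖x 0‖ :=
        (norm_mv_le _ _).trans
          (mul_le_mul_of_nonneg_right (hCe _ ⟨hβ0, hβr⟩) (norm_nonneg _))
      have h5 := norm_add_le (∫ θ in (t' + τ - r)..(0:ℝ),
          mv (mexp A (t' + τ - θ)) (mv B (u (θ - τ)))) (x (t' + τ) - mv (mexp A (t' + τ)) (x 0))
      have h6 := norm_sub_le (x (t' + τ)) (mv (mexp A (t' + τ)) (x 0))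
      linarith
  rw [hueq t' ht']
  have ha1 : ‖mv k (mv (mexp A r) (x t'))‖ ≤ ‖toCLME k‖ * (Ce * ‖x t'‖) := by
    refine (norm_mv_le _ _).trans (mul_le_mul_of_nonneg_left ?_ (norm_nonneg _))
    exact (norm_mv_le _ _).trans (mul_le_mul_of_nonneg_right hCer (norm_nonneg _))
  have ha2 : ‖mv k (∫ s in t'..(t' + r), mv (mexp A (t' + r - s)) (mv B (u (s - r))))‖ ≤
      ‖toCLME k‖ * (‖toCLME B‖ * Ce * r * Du + ‖x (t' + τ)‖ + Ce * ‖x (max (t' + τ - r) 0)‖) :=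
    (norm_mv_le _ _).trans (mul_le_mul_of_nonneg_left hkey (norm_nonneg _))
  have h7 := norm_add_le (mv k (mv (mexp A r) (x t')))
    (mv k (∫ s in t'..(t' + r), mv (mexp A (t' + r - s)) (mv B (u (s - r)))))
  have : ‖toCLME k‖ * (Ce * ‖x t'‖) + ‖toCLME k‖ *
      (‖toCLME B‖ * Ce * r * Du + ‖x (t' + τ)‖ + Ce * ‖x (max (t' + τ - r) 0)‖) =
      ‖toCLME k‖ * (Ce * ‖x t'‖ +
      (‖toCLME B‖ * Ce * r * Du + ‖x (t' + τ)‖ + Ce * ‖x (max (t' + τ - r) 0)‖)) := by ring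
  linarith

/-- The shifted state satisfies the comparison delay system. -/
lemma zcmp (hτ : 0 ≤ τ) (hr : 0 ≤ r) (hτM : τ ≤ M) (hrM : r ≤ M) (hM0 : 0 ≤ M)
    (hx : ContinuousOn x (Ici 0)) (hu : ContinuousOn u (Ici (-M)))
    (hxeq : ∀ t : ℝ, 0 ≤ t →
      x t = x 0 + ∫ s in (0 : ℝ)..t, (mv A (x s) + mv B (u (s - τ))))
    (hueq : ∀ t : ℝ, 0 ≤ t →
      u t = mv k (mv (mexp A r) (x t)) +
        mv k (∫ s in t..(t + r), mv (mexp A (t + r - s)) (mv B (u (s - r)))))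
    {t : ℝ} (ht : 0 ≤ t) :
    x (t + M) = x (0 + M) + ∫ s in (0:ℝ)..t,
      (mv (A + B * k) (x (s + M)) +
        mv (B * k * mexp A r) (x (s - τ + M) - x (s - r + M))) := by
  have fc : ContinuousOn (fun s => mv A (x s) + mv B (u (s - τ))) (Ici 0) :=
    f_contOn hτ hτM hx hu
  have hi1 : IntervalIntegrable (fun s => mv A (x s) + mv B (u (s - τ))) volume 0 (t + M) := by
    apply ContinuousOn.intervalIntegrable
    apply fc.mono
    rw [uIcc_of_le (by linarith)]
    exact Icc_subset_Ici_self
  have hi2 : IntervalIntegrable (fun s => mv A (x s) + mv B (u (s - τ))) volume 0 M := by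
    apply ContinuousOn.intervalIntegrable
    apply fc.mono
    rw [uIcc_of_le hM0]
    exact Icc_subset_Ici_self
  have h1 : x (t + M) - x M =
      ∫ s in M..(t + M), (mv A (x s) + mv B (u (s - τ))) := by
    rw [hxeq (t + M) (by linarith), hxeq M hM0]
    rw [add_sub_add_left_eq_sub]
    exact intervalIntegral.integral_interval_sub_left hi1 hi2
  have h2 : (∫ s in M..(t + M), (mv A (x s) + mv B (u (s - τ)))) =
      ∫ s in (0:ℝ)..t, (mv A (x (s + M)) + mv B (u (s + M - τ))) := by
    have := intervalIntegral.integral_comp_add_right (a := (0:ℝ)) (b := t)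
      (fun s => mv A (x s) + mv B (u (s - τ))) M
    rw [zero_add] at this
    exact this.symm
  have h3 : (∫ s in (0:ℝ)..t, (mv A (x (s + M)) + mv B (u (s + M - τ)))) =
      ∫ s in (0:ℝ)..t, (mv (A + B * k) (x (s + M)) +
        mv (B * k * mexp A r) (x (s - τ + M) - x (s - r + M))) := by
    apply intervalIntegral.integral_congr
    intro s hs
    rw [uIcc_of_le ht] at hs
    have hs0 := hs.1
    have hue := ubound_exact hτ hr hτM hx hu hxeq hueq
      (t' := s + M - τ) (by linarith) (by linarith)
    rw [show s + M - τ + τ - r = s + M - r by ring, show s + M - τ + τ = s + M by ring] at hue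
    show mv A (x (s + M)) + mv B (u (s + M - τ)) =
      mv (A + B * k) (x (s + M)) + mv (B * k * mexp A r) (x (s - τ + M) - x (s - r + M))
    rw [hue, mv_vadd, ← mv_mul, ← mv_mul, ← mv_mul, mv_vsub, ← mv_mul, mv_add, mv_vsub,
      show s - τ + M = s + M - τ by ring, show s - r + M = s + M - r by ring]
    abel
  have hfin := h1.trans (h2.trans h3)
  rw [zero_add]
  have := congrArg (fun v => x M + v) hfin
  simpa using this

set_option maxHeartbeats 1000000 in
/-- Gronwall-type compact-interval bound on `x`. -/
lemma xcompact (hτ : 0 ≤ τ) (hr : 0 ≤ r) (hτM : τ ≤ M) (hrM : r ≤ M)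
    (hx : ContinuousOn x (Ici 0)) (hu : ContinuousOn u (Ici (-M)))
    (hxeq : ∀ t : ℝ, 0 ≤ t →
      x t = x 0 + ∫ s in (0 : ℝ)..t, (mv A (x s) + mv B (u (s - τ))))
    (hueq : ∀ t : ℝ, 0 ≤ t →
      u t = mv k (mv (mexp A r) (x t)) +
        mv k (∫ s in t..(t + r), mv (mexp A (t + r - s)) (mv B (u (s - r)))))
    {Du Ce : ℝ} (hDu : ∀ s ∈ Icc (-M) 0, ‖u s‖ ≤ Du) (hDu0 : 0 ≤ Du)
    (hCe : ∀ s ∈ Icc 0 r, ‖toCLME (mexp A s)‖ ≤ Ce) (hCe0 : 0 ≤ Ce)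
    {K Kb T : ℝ} (hT : 0 ≤ T)
    (hK : ‖toCLME A‖ + ‖toCLME B‖ * (‖toCLME k‖ * (2 * Ce + 1)) + 1 ≤ K)
    (hKb : ‖toCLME B‖ * (‖toCLME B‖ * ‖toCLME k‖ * Ce * r + 1) ≤ Kb) :
    ∀ t ∈ Icc (0:ℝ) T, ‖x t‖ ≤ ‖x 0‖ + ((K * ‖x 0‖ + Kb * Du) / K) * Real.exp (K * T) := by
  have hK0 : (0:ℝ) < K := by
    have h1 : (0:ℝ) ≤ ‖toCLME A‖ := norm_nonneg _
    have h2 : (0:ℝ) ≤ ‖toCLME B‖ * (‖toCLME k‖ * (2 * Ce + 1)) := by positivity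
    linarith
  set a₀ : ℝ := ‖toCLME A‖ with ha₀
  set b₀ : ℝ := ‖toCLME B‖ with hb₀
  set ck : ℝ := ‖toCLME k‖ with hck
  have ha0nn : (0:ℝ) ≤ a₀ := by rw [ha₀]; exact norm_nonneg _
  have hb0nn : (0:ℝ) ≤ b₀ := by rw [hb₀]; exact norm_nonneg _
  have hcknn : (0:ℝ) ≤ ck := by rw [hck]; exact norm_nonneg _
  set h : ℝ → ℝ := fun s => a₀ * ‖x s‖ + b₀ * ‖u (s - τ)‖ with hh
  have hcont : ContinuousOn h (Ici 0) := by
    apply ContinuousOn.add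
    · exact (continuousOn_const.mul hx.norm)
    · refine continuousOn_const.mul (ContinuousOn.norm ?_)
      refine hu.comp ((continuous_id.sub continuous_const).continuousOn) ?_
      intro s hs
      simp only [mem_Ici] at *
      linarith
  have hnn : ∀ s, 0 ≤ h s := fun s =>
    add_nonneg (mul_nonneg ha0nn (norm_nonneg _)) (mul_nonneg hb0nn (norm_nonneg _))
  set ψ : ℝ → ℝ := fun t => ∫ s in (0:ℝ)..t, h s with hψ
  have hintT : ∀ {c d : ℝ}, 0 ≤ c → 0 ≤ d → IntervalIntegrable h volume c d := by
    intro c d hc hd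
    apply ContinuousOn.intervalIntegrable
    apply hcont.mono
    intro s hs
    rcases le_total c d with hcd | hcd
    · rw [uIcc_of_le hcd] at hs; exact le_trans hc hs.1
    · rw [uIcc_of_ge hcd] at hs; exact le_trans hd hs.1
  have hψc : ContinuousOn ψ (Icc 0 T) := by
    have := intervalIntegral.continuousOn_primitive_interval'
      (μ := volume) (f := h) (b₁ := (0:ℝ)) (b₂ := T) (a := (0:ℝ))
      (hintT le_rfl hT) (by rw [uIcc_of_le hT]; exact ⟨le_rfl, hT⟩)
    rwa [uIcc_of_le hT] at this
  have hψnn : ∀ t, 0 ≤ t → 0 ≤ ψ t :=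
    fun t ht => intervalIntegral.integral_nonneg ht (fun s _ => hnn s)
  have hψmono : ∀ c d, 0 ≤ c → c ≤ d → ψ c ≤ ψ d := by
    intro c d hc hcd
    have := intervalIntegral.integral_add_adjacent_intervals
      (hintT le_rfl hc) (hintT hc (hc.trans hcd))
    have h2 : 0 ≤ ∫ s in c..d, h s :=
      intervalIntegral.integral_nonneg hcd (fun s _ => hnn s)
    simp only [hψ]
    linarith [this]
  have hxle : ∀ t, 0 ≤ t → ‖x t‖ ≤ ‖x 0‖ + ψ t := by
    intro t ht
    rw [hxeq t ht]
    have h1 := norm_add_le (x 0) (∫ s in (0:ℝ)..t, (mv A (x s) + mv B (u (s - τ))))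
    have h2 : ‖∫ s in (0:ℝ)..t, (mv A (x s) + mv B (u (s - τ)))‖ ≤ ψ t := by
      refine (intervalIntegral.norm_integral_le_integral_norm ht).trans ?_
      apply intervalIntegral.integral_mono_on ht ?_ (hintT le_rfl ht)
      · intro s hs
        have e1 : ‖mv A (x s)‖ ≤ a₀ * ‖x s‖ := norm_mv_le _ _
        have e2 : ‖mv B (u (s - τ))‖ ≤ b₀ * ‖u (s - τ)‖ := norm_mv_le _ _
        have := norm_add_le (mv A (x s)) (mv B (u (s - τ)))
        simp only [hh]
        linarith
      · apply ContinuousOn.intervalIntegrable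
        apply ContinuousOn.norm
        apply (f_contOn hτ hτM hx hu).mono
        rw [uIcc_of_le ht]
        exact Icc_subset_Ici_self
    linarith
  have hψderiv : ∀ t ∈ Ico (0:ℝ) T, HasDerivWithinAt ψ (h t) (Ici t) t := by
    intro t ht
    have hmeas : StronglyMeasurableAtFilter h (nhdsWithin t (Ioi t)) := by
      refine ⟨Ici 0, ?_, (hcont.aestronglyMeasurable measurableSet_Ici)⟩
      exact Filter.mem_of_superset self_mem_nhdsWithin
        ((Ioi_subset_Ici_self).trans (Ici_subset_Ici.2 ht.1))
    exact intervalIntegral.integral_hasDerivWithinAt_right (hintT le_rfl ht.1) hmeas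
      ((hcont t ht.1).mono ((Ioi_subset_Ici_self).trans (Ici_subset_Ici.2 ht.1)))
  set ε : ℝ := K * ‖x 0‖ + Kb * Du with hε
  have hbound : ∀ t ∈ Ico (0:ℝ) T, ‖h t‖ ≤ K * ‖ψ t‖ + ε := by
    intro t ht
    have ht0 := ht.1
    have hx0nn : (0:ℝ) ≤ ‖x 0‖ := norm_nonneg _
    have hψt := hψnn t ht0
    have hub : ‖u (t - τ)‖ ≤ ck * (2 * Ce + 1) * (‖x 0‖ + ψ t) + (b₀ * ck * Ce * r + 1) * Du := by
      rcases lt_or_ge t τ with hlt | hge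
      · have h1 : ‖u (t - τ)‖ ≤ Du := hDu _ ⟨by linarith, by linarith⟩
        have h2 : (0:ℝ) ≤ ck * (2 * Ce + 1) * (‖x 0‖ + ψ t) :=
          mul_nonneg (mul_nonneg hcknn (by linarith)) (by linarith)
        have h3 : Du ≤ (b₀ * ck * Ce * r + 1) * Du := by
          refine le_mul_of_one_le_left hDu0 ?_
          have : (0:ℝ) ≤ b₀ * ck * Ce * r :=
            mul_nonneg (mul_nonneg (mul_nonneg hb0nn hcknn) hCe0) hr
          linarith
        linarith
      · have hub2 := ubound hτ hr hτM hrM hx hu hxeq hueq hDu hDu0 hCe hCe0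
          (t' := t - τ) (by linarith)
        rw [show t - τ + τ = t by ring] at hub2
        have e1 : ‖x (t - τ)‖ ≤ ‖x 0‖ + ψ t :=
          (hxle _ (by linarith)).trans (by linarith [hψmono (t - τ) t (by linarith) (by linarith)])
        have e2 : ‖x t‖ ≤ ‖x 0‖ + ψ t := hxle t ht0
        have e3 : ‖x (max (t - r) 0)‖ ≤ ‖x 0‖ + ψ t := by
          refine (hxle _ (le_max_right _ _)).trans ?_
          have : max (t - r) 0 ≤ t := by
            apply max_le (by linarith) ht0
          linarith [hψmono (max (t - r) 0) t (le_max_right _ _) this]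
        calc ‖u (t - τ)‖ ≤ ck * (Ce * ‖x (t - τ)‖ +
            (b₀ * Ce * r * Du + ‖x t‖ + Ce * ‖x (max (t - r) 0)‖)) := hub2
          _ ≤ ck * (2 * Ce + 1) * (‖x 0‖ + ψ t) + (b₀ * ck * Ce * r + 1) * Du := by
              nlinarith [mul_le_mul_of_nonneg_left e1 (mul_nonneg hcknn hCe0),
                mul_le_mul_of_nonneg_left e2 hcknn,
                mul_le_mul_of_nonneg_left e3 (mul_nonneg hcknn hCe0), hDu0,
                mul_nonneg (mul_nonneg (mul_nonneg (mul_nonneg hb0nn hcknn) hCe0) hr) hDu0]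
    have hxt : ‖x t‖ ≤ ‖x 0‖ + ψ t := hxle t ht0
    have habs : ‖h t‖ = h t := Real.norm_of_nonneg (hnn t)
    have habs2 : ‖ψ t‖ = ψ t := Real.norm_of_nonneg hψt
    rw [habs, habs2]
    have hfinal : h t ≤ (a₀ + b₀ * (ck * (2 * Ce + 1))) * (‖x 0‖ + ψ t) +
        b₀ * (b₀ * ck * Ce * r + 1) * Du := by
      simp only [hh]
      nlinarith [mul_le_mul_of_nonneg_left hub hb0nn, mul_le_mul_of_nonneg_left hxt ha0nn]
    have hc1 : (a₀ + b₀ * (ck * (2 * Ce + 1))) * (‖x 0‖ + ψ t) ≤ K * (‖x 0‖ + ψ t) := by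
      apply mul_le_mul_of_nonneg_right (by linarith) (by linarith)
    have hc2 : b₀ * (b₀ * ck * Ce * r + 1) * Du ≤ Kb * Du :=
      mul_le_mul_of_nonneg_right hKb hDu0
    simp only [hε]
    nlinarith [hψt]
  have hψ0 : ‖ψ 0‖ ≤ 0 := by
    simp only [hψ, intervalIntegral.integral_same, norm_zero, le_refl]
  have hg := norm_le_gronwallBound_of_norm_deriv_right_le hψc hψderiv hψ0 hbound
  intro t htI
  have hψt := hg t htI
  rw [sub_zero] at hψt
  have hεnn : 0 ≤ ε := by
    have h5 : (0:ℝ) ≤ K * ‖x 0‖ := mul_nonneg hK0.le (norm_nonneg _)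
    have h7 : (0:ℝ) ≤ b₀ * (b₀ * ck * Ce * r + 1) := by
      have : (0:ℝ) ≤ b₀ * ck * Ce * r :=
        mul_nonneg (mul_nonneg (mul_nonneg hb0nn hcknn) hCe0) hr
      exact mul_nonneg hb0nn (by linarith)
    have h6 : (0:ℝ) ≤ Kb * Du := mul_nonneg (h7.trans hKb) hDu0
    simp only [hε]; linarith
  have hgb : gronwallBound 0 K ε t ≤ (ε / K) * Real.exp (K * T) := by
    rw [gronwallBound_of_K_ne_0 (ne_of_gt hK0)]
    simp only [sub_zero, zero_mul, zero_add]
    have h1 : Real.exp (K * t) - 1 ≤ Real.exp (K * T) := by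
      have : Real.exp (K * t) ≤ Real.exp (K * T) := by
        apply Real.exp_le_exp.2
        apply mul_le_mul_of_nonneg_left htI.2 hK0.le
      linarith [Real.exp_pos (K * T)]
    have h2 : 0 ≤ ε / K := div_nonneg hεnn hK0.le
    calc ε / K * (Real.exp (K * t) - 1) ≤ ε / K * Real.exp (K * T) :=
        mul_le_mul_of_nonneg_left h1 h2
      _ = (ε / K) * Real.exp (K * T) := rfl
  have hxt := hxle t htI.1
  have : ψ t ≤ (ε / K) * Real.exp (K * T) := by
    have := hψt.trans hgb
    rwa [Real.norm_of_nonneg (hψnn t htI.1)] at this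
  simp only [hε] at this
  linarith

end sys

set_option maxHeartbeats 2000000 in
theorem stmt_10 (n m : ℕ) (A : Matrix (Fin n) (Fin n) ℝ)
    (B : Matrix (Fin n) (Fin m) ℝ) (k : Matrix (Fin m) (Fin n) ℝ)
    (τ r : ℝ) (hτ : 0 ≤ τ) (hr : 0 ≤ r)
    -- hypothesis: exponential decay for the comparison delay system
    (Q₀ σ₀ : ℝ) (hQ₀ : 0 < Q₀) (hσ₀ : 0 < σ₀)
    (hcmp : ∀ z : ℝ → EuclideanSpace ℝ (Fin n),
      ContinuousOn z (Set.Ici (-max r τ)) →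
      (∀ t : ℝ, 0 ≤ t →
        z t = z 0 + ∫ s in (0 : ℝ)..t,
          (mv (A + B * k) (z s) +
            mv (B * k * mexp A r) (z (s - τ) - z (s - r)))) →
      ∀ t : ℝ, 0 ≤ t →
        ‖z t‖ ≤ Q₀ * Real.exp (-σ₀ * t) *
          sSup ((fun s => ‖z s‖) '' Set.Icc (-max r τ) 0)) :
    ∃ Q σ : ℝ, 0 < Q ∧ 0 < σ ∧
      ∀ (x : ℝ → EuclideanSpace ℝ (Fin n)) (u : ℝ → EuclideanSpace ℝ (Fin m)),
        ContinuousOn x (Set.Ici 0) →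
        ContinuousOn u (Set.Ici (-max r τ)) →
        (∀ t : ℝ, 0 ≤ t →
          x t = x 0 + ∫ s in (0 : ℝ)..t, (mv A (x s) + mv B (u (s - τ)))) →
        (∀ t : ℝ, 0 ≤ t →
          u t = mv k (mv (mexp A r) (x t)) +
            mv k (∫ s in t..(t + r), mv (mexp A (t + r - s)) (mv B (u (s - r))))) →
        u 0 = mv k (mv (mexp A r) (x 0)) +
          mv k (∫ s in (-r : ℝ)..0, mv (mexp A (-s)) (mv B (u s))) →
        ∀ t : ℝ, 0 ≤ t →
          ‖x t‖ + sSup ((fun s => ‖u s‖) '' Set.Icc (t - max r τ) t) ≤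
            Q * Real.exp (-σ * t) *
              (‖x 0‖ + sSup ((fun s => ‖u s‖) '' Set.Icc (-max r τ) 0)) := by
  have one_le_exp : ∀ z : ℝ, 0 ≤ z → 1 ≤ Real.exp z := by
    intro z hz
    rw [← Real.exp_zero]
    exact Real.exp_le_exp.2 hz
  set M : ℝ := max r τ with hM
  have hτM : τ ≤ M := le_max_right r τ
  have hrM : r ≤ M := le_max_left r τ
  have hM0 : (0:ℝ) ≤ M := le_trans hr hrM
  -- the uniform constants
  set Ce : ℝ := sSup ((fun s => ‖toCLME (mexp A s)‖) '' Icc 0 r) with hCedef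
  have hCebdd : BddAbove ((fun s => ‖toCLME (mexp A s)‖) '' Icc 0 r) :=
    (isCompact_Icc.image_of_continuousOn
      ((continuous_toCLME_mexp A).norm.continuousOn)).bddAbove
  have hCe : ∀ s ∈ Icc (0:ℝ) r, ‖toCLME (mexp A s)‖ ≤ Ce :=
    fun s hs => le_csSup hCebdd ⟨s, hs, rfl⟩
  have hCe0 : (0:ℝ) ≤ Ce := le_trans (norm_nonneg _) (hCe 0 ⟨le_rfl, hr⟩)
  set a₀ : ℝ := ‖toCLME A‖ with ha₀
  set b₀ : ℝ := ‖toCLME B‖ with hb₀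
  set ck : ℝ := ‖toCLME k‖ with hck
  have ha0nn : (0:ℝ) ≤ a₀ := by rw [ha₀]; exact norm_nonneg _
  have hb0nn : (0:ℝ) ≤ b₀ := by rw [hb₀]; exact norm_nonneg _
  have hcknn : (0:ℝ) ≤ ck := by rw [hck]; exact norm_nonneg _
  set K : ℝ := a₀ + b₀ * (ck * (2 * Ce + 1)) + 1 with hKdef
  set Kb : ℝ := b₀ * (b₀ * ck * Ce * r + 1) with hKbdef
  have hK0 : (0:ℝ) < K := by
    have h2 : (0:ℝ) ≤ b₀ * (ck * (2 * Ce + 1)) :=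
      mul_nonneg hb0nn (mul_nonneg hcknn (by linarith))
    rw [hKdef]; linarith
  have hKb0 : (0:ℝ) ≤ Kb := by
    have : (0:ℝ) ≤ b₀ * ck * Ce * r :=
      mul_nonneg (mul_nonneg (mul_nonneg hb0nn hcknn) hCe0) hr
    rw [hKbdef]; exact mul_nonneg hb0nn (by linarith)
  set T' : ℝ := 2 * M + τ with hT'def
  have hT'0 : (0:ℝ) ≤ T' := by rw [hT'def]; linarith
  have hMT' : M ≤ T' := by rw [hT'def]; linarith
  have hMτT' : M + τ ≤ T' := by rw [hT'def]; linarith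
  set Cx : ℝ := 1 + ((K + Kb) / K) * Real.exp (K * T') with hCxdef
  have hCx1 : (1:ℝ) ≤ Cx := by
    have : (0:ℝ) ≤ ((K + Kb) / K) * Real.exp (K * T') :=
      mul_nonneg (div_nonneg (by linarith) hK0.le) (Real.exp_pos _).le
    rw [hCxdef]; linarith
  have hCx0 : (0:ℝ) ≤ Cx := by linarith
  set C₁ : ℝ := Cx * (Real.exp (σ₀ * T') + Q₀ * Real.exp (σ₀ * M)) with hC₁def
  have hC₁0 : (0:ℝ) ≤ C₁ := by
    rw [hC₁def]
    exact mul_nonneg hCx0 (add_nonneg (Real.exp_pos _).le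
      (mul_nonneg hQ₀.le (Real.exp_pos _).le))
  set Cu0 : ℝ := ck * (2 * Ce * Cx + Cx + b₀ * Ce * r) with hCu0def
  have hCu00 : (0:ℝ) ≤ Cu0 := by
    rw [hCu0def]
    refine mul_nonneg hcknn ?_
    have h1 : (0:ℝ) ≤ 2 * Ce * Cx := by positivity
    have h2 : (0:ℝ) ≤ b₀ * Ce * r := mul_nonneg (mul_nonneg hb0nn hCe0) hr
    linarith
  set C₂ : ℝ := 1 + Cu0 * Real.exp (σ₀ * M) + ck * (2 * Ce + 1) * C₁ * Real.exp (σ₀ * M)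
    with hC₂def
  have hC₂1 : (1:ℝ) ≤ C₂ := by
    have h1 : (0:ℝ) ≤ Cu0 * Real.exp (σ₀ * M) := mul_nonneg hCu00 (Real.exp_pos _).le
    have h2 : (0:ℝ) ≤ ck * (2 * Ce + 1) * C₁ * Real.exp (σ₀ * M) :=
      mul_nonneg (mul_nonneg (mul_nonneg hcknn (by linarith)) hC₁0) (Real.exp_pos _).le
    rw [hC₂def]; linarith
  have hC₂0 : (0:ℝ) ≤ C₂ := by linarith
  set Q : ℝ := C₁ + C₂ * Real.exp (σ₀ * M) + 1 with hQdef
  have hQpos : (0:ℝ) < Q := by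
    have h1 : (0:ℝ) ≤ C₂ * Real.exp (σ₀ * M) := mul_nonneg hC₂0 (Real.exp_pos _).le
    rw [hQdef]; linarith
  have hKle : ‖toCLME A‖ + ‖toCLME B‖ * (‖toCLME k‖ * (2 * Ce + 1)) + 1 ≤ K :=
    le_of_eq hKdef.symm
  have hKble : ‖toCLME B‖ * (‖toCLME B‖ * ‖toCLME k‖ * Ce * r + 1) ≤ Kb :=
    le_of_eq hKbdef.symm
  clear_value M Ce a₀ b₀ ck K Kb T' Cx C₁ Cu0 C₂ Q
  refine ⟨Q, σ₀, hQpos, hσ₀, ?_⟩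
  intro x u hx hu hxeq hueq _ t ht
  -- per-solution data
  set Du : ℝ := sSup ((fun s => ‖u s‖) '' Icc (-M) 0) with hDudef
  have hDubdd : BddAbove ((fun s => ‖u s‖) '' Icc (-M) 0) := by
    refine (isCompact_Icc.image_of_continuousOn ?_).bddAbove
    refine (hu.mono ?_).norm
    intro s hs
    exact hs.1
  have hDu : ∀ s ∈ Icc (-M) 0, ‖u s‖ ≤ Du := fun s hs => le_csSup hDubdd ⟨s, hs, rfl⟩
  have hDu0 : (0:ℝ) ≤ Du :=
    le_trans (norm_nonneg (u 0)) (hDu 0 ⟨by linarith, le_rfl⟩)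
  set X0 : ℝ := ‖x 0‖ with hX0def
  have hX00 : (0:ℝ) ≤ X0 := norm_nonneg _
  set D : ℝ := X0 + Du with hDdef
  have hXD : X0 ≤ D := by rw [hDdef]; linarith
  have hDuD : Du ≤ D := by rw [hDdef]; linarith
  have hD0 : (0:ℝ) ≤ D := by rw [hDdef]; linarith
  -- compact bound
  have hcx : ∀ s ∈ Icc (0:ℝ) T', ‖x s‖ ≤ Cx * D := by
    intro s hs
    have e1 := xcompact hτ hr hτM hrM hx hu hxeq hueq hDu hDu0 hCe hCe0 hT'0
      hKle hKble s hs
    have e2 : (K * X0 + Kb * Du) / K ≤ ((K + Kb) * D) / K := by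
      apply (div_le_div_iff_of_pos_right hK0).2
      have h1 : K * X0 ≤ K * D := mul_le_mul_of_nonneg_left hXD hK0.le
      have h2 : Kb * Du ≤ Kb * D := mul_le_mul_of_nonneg_left hDuD hKb0
      linarith only [h1, h2]
    have e3 : X0 + (K * X0 + Kb * Du) / K * Real.exp (K * T') ≤
        D + ((K + Kb) * D) / K * Real.exp (K * T') := by
      have := mul_le_mul_of_nonneg_right e2 (Real.exp_pos (K * T')).le
      linarith
    have e4 : D + ((K + Kb) * D) / K * Real.exp (K * T') = Cx * D := by
      rw [hCxdef]; field_simp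
    calc ‖x s‖ ≤ X0 + (K * X0 + Kb * Du) / K * Real.exp (K * T') := e1
      _ ≤ D + ((K + Kb) * D) / K * Real.exp (K * T') := e3
      _ = Cx * D := e4
  -- the comparison system decay applied to the shifted state
  have hzdecay := hcmp (fun s => x (s + M))
    (by
      refine hx.comp ((continuous_add_right M).continuousOn) ?_
      intro s hs
      simp only [mem_Ici] at *
      linarith)
    (fun t' ht' => zcmp hτ hr hτM hrM hM0 hx hu hxeq hueq ht')
  set Sz : ℝ := sSup ((fun s => ‖x (s + M)‖) '' Icc (-M) 0) with hSzdef
  have hSz : Sz ≤ Cx * D := by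
    rw [hSzdef]
    apply Real.sSup_le
    · rintro y ⟨s, hs, rfl⟩
      exact hcx (s + M) ⟨by linarith [hs.1], by linarith [hs.2, hMT']⟩
    · exact mul_nonneg hCx0 hD0
  have hxdecay : ∀ s : ℝ, M ≤ s →
      ‖x s‖ ≤ Q₀ * Real.exp (-σ₀ * (s - M)) * (Cx * D) := by
    intro s hs
    have h1 : ‖x (s - M + M)‖ ≤ Q₀ * Real.exp (-σ₀ * (s - M)) * Sz :=
      hzdecay (s - M) (by linarith)
    rw [show s - M + M = s by ring] at h1
    refine h1.trans ?_
    have h2 : (0:ℝ) ≤ Q₀ * Real.exp (-σ₀ * (s - M)) :=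
      mul_nonneg hQ₀.le (Real.exp_pos _).le
    exact mul_le_mul_of_nonneg_left hSz h2
  -- pointwise exponential bound for x
  have hx1 : ∀ s : ℝ, 0 ≤ s → ‖x s‖ ≤ C₁ * Real.exp (-σ₀ * s) * D := by
    intro s hs
    rcases le_total s T' with hsT | hsT
    · have h1 : ‖x s‖ ≤ Cx * D := hcx s ⟨hs, hsT⟩
      have h2 : (1:ℝ) ≤ Real.exp (σ₀ * T') * Real.exp (-σ₀ * s) := by
        rw [← Real.exp_add]
        apply one_le_exp
        linarith only [mul_nonneg hσ₀.le (sub_nonneg.2 hsT)]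
      have h3 : Cx * D ≤ Cx * (Real.exp (σ₀ * T') * Real.exp (-σ₀ * s)) * D := by
        linarith only [mul_nonneg (mul_nonneg (sub_nonneg.2 h2) hCx0) hD0]
      have h4 : Cx * (Real.exp (σ₀ * T') * Real.exp (-σ₀ * s)) * D ≤
          C₁ * Real.exp (-σ₀ * s) * D := by
        rw [hC₁def]
        have h5 : (0:ℝ) ≤ Q₀ * Real.exp (σ₀ * M) := mul_nonneg hQ₀.le (Real.exp_pos _).le
        linarith only [mul_nonneg (mul_nonneg hCx0 h5)
          (mul_nonneg (Real.exp_pos (-σ₀ * s)).le hD0)]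
      linarith
    · have h1 := hxdecay s (le_trans hMT' hsT)
      have h2 : Real.exp (-σ₀ * (s - M)) = Real.exp (σ₀ * M) * Real.exp (-σ₀ * s) := by
        rw [← Real.exp_add]
        congr 1
        ring
      refine h1.trans ?_
      rw [h2, hC₁def]
      have h6 : (0:ℝ) ≤ Real.exp (σ₀ * T') := (Real.exp_pos _).le
      linarith only [mul_nonneg (mul_nonneg hCx0 h6)
        (mul_nonneg (Real.exp_pos (-σ₀ * s)).le hD0)]
  -- pointwise exponential bound for u
  have hu1 : ∀ s : ℝ, -M ≤ s → ‖u s‖ ≤ C₂ * Real.exp (-σ₀ * s) * D := by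
    intro s hs
    have hexpnn : (0:ℝ) ≤ Real.exp (-σ₀ * s) := (Real.exp_pos _).le
    rcases lt_or_ge s 0 with hs0 | hs0
    · have h1 : ‖u s‖ ≤ Du := hDu s ⟨hs, hs0.le⟩
      have h2 : (1:ℝ) ≤ Real.exp (-σ₀ * s) := one_le_exp _
        (by linarith only [mul_nonneg hσ₀.le (neg_nonneg.2 hs0.le)])
      have h3 : Du ≤ C₂ * Real.exp (-σ₀ * s) * D := by
        have p1 : (1:ℝ) * 1 ≤ C₂ * Real.exp (-σ₀ * s) :=
          mul_le_mul hC₂1 h2 zero_le_one hC₂0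
        have p2 : (0:ℝ) ≤ (C₂ * Real.exp (-σ₀ * s) - 1) * D :=
          mul_nonneg (by linarith only [p1]) hD0
        linarith only [p2, hDuD]
      linarith
    rcases le_total s M with hsM | hsM
    · have hub := ubound hτ hr hτM hrM hx hu hxeq hueq hDu hDu0 hCe hCe0 hs0
      have e1 : ‖x s‖ ≤ Cx * D := hcx s ⟨hs0, by linarith⟩
      have e2 : ‖x (s + τ)‖ ≤ Cx * D := hcx _ ⟨by linarith, by linarith⟩
      have e3 : ‖x (max (s + τ - r) 0)‖ ≤ Cx * D := by
        apply hcx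
        constructor
        · exact le_max_right _ _
        · apply max_le (by linarith) hT'0
      have h4 : ‖u s‖ ≤ Cu0 * D := by
        rw [hCu0def, hck, hb₀, mul_assoc]
        have hbB : (0:ℝ) ≤ ‖toCLME B‖ := norm_nonneg _
        have hd1 : ‖toCLME B‖ * Ce * r * Du ≤ ‖toCLME B‖ * Ce * r * D :=
          mul_le_mul_of_nonneg_left hDuD (mul_nonneg (mul_nonneg hbB hCe0) hr)
        refine hub.trans ?_
        have hc1 : Ce * ‖x s‖ ≤ Ce * (Cx * D) := mul_le_mul_of_nonneg_left e1 hCe0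
        have hc3 : Ce * ‖x (max (s + τ - r) 0)‖ ≤ Ce * (Cx * D) :=
          mul_le_mul_of_nonneg_left e3 hCe0
        have inner : Ce * ‖x s‖ + (‖toCLME B‖ * Ce * r * Du + ‖x (s + τ)‖ +
            Ce * ‖x (max (s + τ - r) 0)‖) ≤
            (2 * Ce * Cx + Cx + ‖toCLME B‖ * Ce * r) * D := by
          linarith only [hc1, e2, hc3, hd1]
        exact mul_le_mul_of_nonneg_left inner (norm_nonneg (toCLME k))
      have h5 : (1:ℝ) ≤ Real.exp (σ₀ * M) * Real.exp (-σ₀ * s) := by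
        rw [← Real.exp_add]
        apply one_le_exp
        linarith only [mul_nonneg hσ₀.le (sub_nonneg.2 hsM)]
      have h6 : Cu0 * D ≤ Cu0 * (Real.exp (σ₀ * M) * Real.exp (-σ₀ * s)) * D := by
        linarith only [mul_nonneg (mul_nonneg (sub_nonneg.2 h5) hCu00) hD0]
      have h7 : Cu0 * (Real.exp (σ₀ * M) * Real.exp (-σ₀ * s)) * D ≤
          C₂ * Real.exp (-σ₀ * s) * D := by
        rw [hC₂def]
        have h8 : (0:ℝ) ≤ ck * (2 * Ce + 1) * C₁ * Real.exp (σ₀ * M) :=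
          mul_nonneg (mul_nonneg (mul_nonneg hcknn (by linarith only [hCe0])) hC₁0)
            (Real.exp_pos _).le
        linarith only [mul_nonneg hexpnn hD0, mul_nonneg h8 (mul_nonneg hexpnn hD0)]
      linarith
    · have hue := ubound_exact hτ hr hτM hx hu hxeq hueq hs0 (by linarith)
      have e1 : ‖x s‖ ≤ C₁ * Real.exp (-σ₀ * s) * D := hx1 s hs0
      have e2 : ‖x (s + τ)‖ ≤ C₁ * Real.exp (-σ₀ * s) * D := by
        refine (hx1 _ (by linarith)).trans ?_
        have hee : Real.exp (-σ₀ * (s + τ)) ≤ Real.exp (-σ₀ * s) :=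
          Real.exp_le_exp.2 (by linarith only [mul_nonneg hσ₀.le hτ])
        linarith only [mul_nonneg (mul_nonneg hC₁0 (sub_nonneg.2 hee)) hD0]
      have e3 : ‖x (s + τ - r)‖ ≤ C₁ * (Real.exp (σ₀ * M) * Real.exp (-σ₀ * s)) * D := by
        refine (hx1 _ (by linarith)).trans ?_
        have h2 : Real.exp (-σ₀ * (s + τ - r)) ≤ Real.exp (σ₀ * M) * Real.exp (-σ₀ * s) := by
          rw [← Real.exp_add]
          apply Real.exp_le_exp.2
          linarith only [mul_nonneg hσ₀.le
            (show (0:ℝ) ≤ M + τ - r by linarith only [hrM, hτ])]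
        linarith only [mul_nonneg (mul_nonneg hC₁0 (sub_nonneg.2 h2)) hD0]
      have hCer : ‖toCLME (mexp A r)‖ ≤ Ce := hCe r ⟨hr, le_rfl⟩
      have hn1 : ‖mv k (mv (mexp A r) (x s))‖ ≤ ck * (Ce * ‖x s‖) := by
        refine (norm_mv_le _ _).trans ?_
        rw [hck]
        refine mul_le_mul_of_nonneg_left ?_ (norm_nonneg _)
        exact (norm_mv_le _ _).trans (mul_le_mul_of_nonneg_right hCer (norm_nonneg _))
      have hn2 : ‖mv k (x (s + τ) - mv (mexp A r) (x (s + τ - r)))‖ ≤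
          ck * (‖x (s + τ)‖ + Ce * ‖x (s + τ - r)‖) := by
        refine (norm_mv_le _ _).trans ?_
        rw [hck]
        refine mul_le_mul_of_nonneg_left ?_ (norm_nonneg _)
        refine (norm_sub_le _ _).trans ?_
        have := (norm_mv_le (mexp A r) (x (s + τ - r))).trans
          (mul_le_mul_of_nonneg_right hCer (norm_nonneg _))
        linarith
      have hnu : ‖u s‖ ≤ ck * (Ce * ‖x s‖) + ck * (‖x (s + τ)‖ + Ce * ‖x (s + τ - r)‖) := by
        rw [hue]
        exact (norm_add_le _ _).trans (add_le_add hn1 hn2)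
      have hfin : ‖u s‖ ≤ ck * (2 * Ce + 1) * C₁ * (Real.exp (σ₀ * M) * Real.exp (-σ₀ * s)) * D := by
        have hx0 : (0:ℝ) ≤ C₁ * Real.exp (-σ₀ * s) * D := by
          exact mul_nonneg (mul_nonneg hC₁0 hexpnn) hD0
        have hbig : C₁ * Real.exp (-σ₀ * s) * D ≤
            C₁ * (Real.exp (σ₀ * M) * Real.exp (-σ₀ * s)) * D := by
          have h9 : (1:ℝ) ≤ Real.exp (σ₀ * M) := one_le_exp _ (mul_nonneg hσ₀.le hM0)
          linarith only [mul_nonneg (mul_nonneg (sub_nonneg.2 h9) hC₁0)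
            (mul_nonneg hexpnn hD0)]
        have hc1 : Ce * ‖x s‖ ≤ Ce * (C₁ * (Real.exp (σ₀ * M) * Real.exp (-σ₀ * s)) * D) :=
          mul_le_mul_of_nonneg_left (e1.trans hbig) hCe0
        have hc2 : ‖x (s + τ)‖ ≤ C₁ * (Real.exp (σ₀ * M) * Real.exp (-σ₀ * s)) * D :=
          e2.trans hbig
        have hc3 : Ce * ‖x (s + τ - r)‖ ≤
            Ce * (C₁ * (Real.exp (σ₀ * M) * Real.exp (-σ₀ * s)) * D) :=
          mul_le_mul_of_nonneg_left e3 hCe0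
        have q1 := mul_le_mul_of_nonneg_left hc1 hcknn
        have q2 := mul_le_mul_of_nonneg_left hc2 hcknn
        have q3 := mul_le_mul_of_nonneg_left hc3 hcknn
        have q2' := mul_le_mul_of_nonneg_left q2 hcknn
        linarith only [hnu, q1, mul_le_mul_of_nonneg_left hc2 hcknn, q3]
      refine hfin.trans ?_
      rw [hC₂def]
      have h8 : (0:ℝ) ≤ Cu0 * Real.exp (σ₀ * M) := mul_nonneg hCu00 (Real.exp_pos _).le
      linarith only [mul_nonneg hexpnn hD0, mul_nonneg h8 (mul_nonneg hexpnn hD0)]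
  -- final assembly
  have hxt : ‖x t‖ ≤ C₁ * Real.exp (-σ₀ * t) * D := hx1 t ht
  have hexpnnt : (0:ℝ) ≤ Real.exp (-σ₀ * t) := (Real.exp_pos _).le
  have hsup : sSup ((fun s => ‖u s‖) '' Icc (t - M) t) ≤
      C₂ * Real.exp (σ₀ * M) * Real.exp (-σ₀ * t) * D := by
    apply Real.sSup_le
    · rintro y ⟨s, hs, rfl⟩
      have hsM : -M ≤ s := by linarith [hs.1]
      refine (hu1 s hsM).trans ?_
      have h2 : Real.exp (-σ₀ * s) ≤ Real.exp (σ₀ * M) * Real.exp (-σ₀ * t) := by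
        rw [← Real.exp_add]
        apply Real.exp_le_exp.2
        linarith only [mul_nonneg hσ₀.le (sub_nonneg.2 hs.1)]
      linarith only [mul_nonneg (mul_nonneg hC₂0 (sub_nonneg.2 h2)) hD0]
    · exact mul_nonneg (mul_nonneg (mul_nonneg hC₂0 (Real.exp_pos _).le) hexpnnt) hD0
  have hQfin : C₁ * Real.exp (-σ₀ * t) * D +
      C₂ * Real.exp (σ₀ * M) * Real.exp (-σ₀ * t) * D ≤ Q * Real.exp (-σ₀ * t) * D := by
    rw [hQdef]
    linarith only [mul_nonneg hexpnnt hD0]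
  calc ‖x t‖ + sSup ((fun s => ‖u s‖) '' Icc (t - M) t) ≤
      C₁ * Real.exp (-σ₀ * t) * D + C₂ * Real.exp (σ₀ * M) * Real.exp (-σ₀ * t) * D :=
        add_le_add hxt hsup
    _ ≤ Q * Real.exp (-σ₀ * t) * D := hQfin
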